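/- For every n ≥ 1, every σ > 0, every θ₀ ∈ ℝ with |θ₀| ≤ Mσ, and every ε ∈ ℝ, the denominator integral satisfies D_{n,σ,θ₀}(ε) = ∫_ℝ exp(−v²/2 + εv)·(√n σ)^{−1} φ((θ₀ + v/√n)/σ) dv ≥ 2 c_φ · exp(−n σ²/6). -/

import Mathlib

open MeasureTheory ProbabilityTheory

/-- Denominator integral `D_{n,σ,θ₀}(ε)`. -/
noncomputable def Dint (φ : ℝ → ℝ) (n : ℕ) (σ θ₀ ε : ℝ) : ℝ :=
  ∫ v : ℝ, Real.exp (-v ^ 2 / 2 + ε * v) *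
    ((Real.sqrt n * σ)⁻¹ * φ ((θ₀ + v / Real.sqrt n) / σ))

/-- Global integrability of the Gaussian-type factor. -/
lemma exp_factor_integrable (ε : ℝ) :
    Integrable (fun v : ℝ => Real.exp (-v ^ 2 / 2 + ε * v)) := by
  have h := (integrable_exp_neg_mul_sq (by norm_num : (0:ℝ) < 1/2)).comp_sub_right ε
  have h2 := h.const_mul (Real.exp (ε ^ 2 / 2))
  refine h2.congr (Filter.Eventually.of_forall fun v => ?_)
  show Real.exp (ε ^ 2 / 2) * Real.exp (-(1/2) * (v - ε) ^ 2) = _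
  rw [← Real.exp_add]
  exact congrArg Real.exp (by ring)

/-- Jensen lower bound for the Gaussian-type integral on a symmetric interval. -/
lemma jensen_exp (a ε : ℝ) (ha : 0 < a) :
    2 * a * Real.exp (-a ^ 2 / 6) ≤
      ∫ v in Set.Ioo (-a) a, Real.exp (-v ^ 2 / 2 + ε * v) := by
  set μ : Measure ℝ := volume.restrict (Set.Ioo (-a) a) with hμ
  have hμuniv : μ Set.univ = ENNReal.ofReal (2 * a) := by
    rw [hμ, Measure.restrict_apply_univ, Real.volume_Ioo]
    congr 1; ring
  haveI : IsFiniteMeasure μ := ⟨by rw [hμuniv]; exact ENNReal.ofReal_lt_top⟩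
  haveI : NeZero μ := ⟨Measure.measure_univ_ne_zero.mp (by
    rw [hμuniv]
    exact (ENNReal.ofReal_pos.mpr (by linarith : (0:ℝ) < 2 * a)).ne')⟩
  have hf_cont : Continuous (fun v : ℝ => -v ^ 2 / 2 + ε * v) := by continuity
  have hfi : Integrable (fun v : ℝ => -v ^ 2 / 2 + ε * v) μ := by
    rw [hμ]
    exact (hf_cont.integrableOn_Ioc.mono_set Set.Ioo_subset_Ioc_self)
  have hgi : Integrable ((fun x => Real.exp x) ∘ fun v : ℝ => -v ^ 2 / 2 + ε * v) μ := by
    rw [hμ]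
    exact ((Real.continuous_exp.comp hf_cont).integrableOn_Ioc.mono_set
      Set.Ioo_subset_Ioc_self)
  have hJ := convexOn_exp.map_average_le Real.continuous_exp.continuousOn isClosed_univ
    (Filter.Eventually.of_forall fun _ => Set.mem_univ _) hfi hgi
  have hmeas2a : (μ Set.univ).toReal = 2 * a := by
    rw [hμuniv, ENNReal.toReal_ofReal (by linarith)]
  -- compute the average of f
  have hintf : (∫ v, (-v ^ 2 / 2 + ε * v) ∂μ) = -a ^ 3 / 3 := by
    rw [hμ, ← MeasureTheory.integral_Ioc_eq_integral_Ioo,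
      ← intervalIntegral.integral_of_le (by linarith : -a ≤ a)]
    have hF : ∀ x ∈ Set.uIcc (-a) a,
        HasDerivAt (fun x : ℝ => -(x ^ 3 / 6) + ε * x ^ 2 / 2) (-x ^ 2 / 2 + ε * x) x := by
      intro x _
      have h1 := hasDerivAt_pow 3 x
      have h2 := hasDerivAt_pow 2 x
      have H := (h1.div_const 6).neg.add ((h2.const_mul ε).div_const 2)
      exact H.congr_deriv (by push_cast; ring)
    rw [intervalIntegral.integral_eq_sub_of_hasDerivAt hF
      (hf_cont.intervalIntegrable (-a) a)]
    ring
  have havgf : (⨍ v, (-v ^ 2 / 2 + ε * v) ∂μ) = -a ^ 2 / 6 := by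
    rw [average_eq, measureReal_def, hmeas2a, hintf, smul_eq_mul]
    field_simp
    ring
  rw [havgf] at hJ
  have havgg : (⨍ v, Real.exp (-v ^ 2 / 2 + ε * v) ∂μ) =
      (2 * a)⁻¹ * ∫ v, Real.exp (-v ^ 2 / 2 + ε * v) ∂μ := by
    rw [average_eq, measureReal_def, hmeas2a, smul_eq_mul]
  have hJ' : Real.exp (-a ^ 2 / 6) ≤
      (2 * a)⁻¹ * ∫ v, Real.exp (-v ^ 2 / 2 + ε * v) ∂μ := by
    rw [← havgg]; exact hJ
  have h2a : 0 < 2 * a := by linarith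
  calc 2 * a * Real.exp (-a ^ 2 / 6)
      ≤ 2 * a * ((2 * a)⁻¹ * ∫ v, Real.exp (-v ^ 2 / 2 + ε * v) ∂μ) := by
        exact mul_le_mul_of_nonneg_left hJ' (le_of_lt h2a)
    _ = ∫ v, Real.exp (-v ^ 2 / 2 + ε * v) ∂μ := by
        field_simp

theorem denominator_lower_bound (φ : ℝ → ℝ) (cφ Cφ τ M : ℝ)
    (hφ_meas : Measurable φ) (hφ_nonneg : ∀ x, 0 ≤ φ x)
    (hφ_prob : (∫ x : ℝ, φ x) = 1)
    (hc : 0 < cφ) (hcC : cφ ≤ Cφ)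
    (hub : ∀ x : ℝ, φ x ≤ Cφ)
    (hlb : ∀ x ∈ Set.Ioo (-τ) τ, cφ ≤ φ x)
    (hmom : Integrable (fun x : ℝ => x ^ 2 * φ x))
    (hM : 0 < M) (hτ : M + 1 ≤ τ) :
    ∀ n : ℕ, 1 ≤ n → ∀ σ : ℝ, 0 < σ → ∀ θ₀ : ℝ, |θ₀| ≤ M * σ → ∀ ε : ℝ,
      2 * cφ * Real.exp (-(n * σ ^ 2) / 6) ≤ Dint φ n σ θ₀ ε := by
  intro n hn σ hσ θ₀ hθ₀ ε
  set s : ℝ := Real.sqrt n with hs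
  have hs_pos : 0 < s := Real.sqrt_pos.mpr (by exact_mod_cast Nat.lt_of_lt_of_le Nat.zero_lt_one hn)
  have hs_sq : s ^ 2 = (n : ℝ) := Real.sq_sqrt (by positivity)
  set a : ℝ := s * σ with hadef
  have ha : 0 < a := mul_pos hs_pos hσ
  have ha_sq : a ^ 2 = n * σ ^ 2 := by rw [hadef, mul_pow, hs_sq]
  set F : ℝ → ℝ := fun v => Real.exp (-v ^ 2 / 2 + ε * v) *
    ((s * σ)⁻¹ * φ ((θ₀ + v / s) / σ)) with hF
  have hF_nonneg : ∀ v, 0 ≤ F v := by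
    intro v
    exact mul_nonneg (Real.exp_nonneg _)
      (mul_nonneg (inv_nonneg.mpr (le_of_lt ha)) (hφ_nonneg _))
  have hexp := exp_factor_integrable ε
  have hF_meas : Measurable F := by
    apply Measurable.mul
    · exact Real.measurable_exp.comp (by fun_prop)
    · exact (hφ_meas.comp (by fun_prop)).const_mul _
  have hF_int : Integrable F := by
    refine (hexp.mul_const ((s * σ)⁻¹ * Cφ)).mono' hF_meas.aestronglyMeasurable
      (Filter.Eventually.of_forall fun v => ?_)
    rw [Real.norm_of_nonneg (hF_nonneg v)]
    refine mul_le_mul_of_nonneg_left ?_ (Real.exp_nonneg _)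
    exact mul_le_mul_of_nonneg_left (hub _) (inv_nonneg.mpr (le_of_lt ha))
  -- φ lower bound on the interval
  have hφ_lb : ∀ v ∈ Set.Ioo (-a) a, cφ ≤ φ ((θ₀ + v / s) / σ) := by
    intro v hv
    apply hlb
    rw [Set.mem_Ioo, ← abs_lt]
    have hv' : |v| < a := abs_lt.mpr ⟨hv.1, hv.2⟩
    have h1 : |θ₀ + v / s| ≤ |θ₀| + |v| / s := by
      calc |θ₀ + v / s| ≤ |θ₀| + |v / s| := abs_add_le _ _
        _ = |θ₀| + |v| / s := by rw [abs_div, abs_of_pos hs_pos]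
    have h2 : |v| / s < σ := by
      rw [div_lt_iff₀ hs_pos]
      calc |v| < a := hv'
        _ = σ * s := by rw [hadef]; ring
    have h3 : |θ₀ + v / s| < M * σ + σ := by
      calc |θ₀ + v / s| ≤ |θ₀| + |v| / s := h1
        _ < M * σ + σ := by linarith [hθ₀]
    have h4 : |(θ₀ + v / s) / σ| < M + 1 := by
      rw [abs_div, abs_of_pos hσ, div_lt_iff₀ hσ]
      calc |θ₀ + v / s| < M * σ + σ := h3
        _ = (M + 1) * σ := by ring
    linarith [h4]
  -- lower bound F on the interval
  have hF_lb : ∀ v ∈ Set.Ioo (-a) a,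
      Real.exp (-v ^ 2 / 2 + ε * v) * ((s * σ)⁻¹ * cφ) ≤ F v := by
    intro v hv
    refine mul_le_mul_of_nonneg_left ?_ (Real.exp_nonneg _)
    exact mul_le_mul_of_nonneg_left (hφ_lb v hv) (inv_nonneg.mpr (le_of_lt ha))
  have hmeas_Ioo : MeasurableSet (Set.Ioo (-a) a) := measurableSet_Ioo
  have step1 : ∫ v in Set.Ioo (-a) a, F v ≤ ∫ v, F v :=
    setIntegral_le_integral hF_int (Filter.Eventually.of_forall hF_nonneg)
  have step2 : ∫ v in Set.Ioo (-a) a, Real.exp (-v ^ 2 / 2 + ε * v) * ((s * σ)⁻¹ * cφ)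
      ≤ ∫ v in Set.Ioo (-a) a, F v := by
    refine setIntegral_mono_on ((hexp.mul_const _).integrableOn)
      hF_int.integrableOn hmeas_Ioo hF_lb
  have step3 : (∫ v in Set.Ioo (-a) a, Real.exp (-v ^ 2 / 2 + ε * v) * ((s * σ)⁻¹ * cφ))
      = ((s * σ)⁻¹ * cφ) * ∫ v in Set.Ioo (-a) a, Real.exp (-v ^ 2 / 2 + ε * v) := by
    rw [← integral_const_mul]
    congr 1; ext v; ring
  have step4 := jensen_exp a ε ha
  have key : 2 * cφ * Real.exp (-a ^ 2 / 6) ≤ ∫ v, F v := by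
    have h5 : ((s * σ)⁻¹ * cφ) * (2 * a * Real.exp (-a ^ 2 / 6))
        ≤ ((s * σ)⁻¹ * cφ) * ∫ v in Set.Ioo (-a) a, Real.exp (-v ^ 2 / 2 + ε * v) :=
      mul_le_mul_of_nonneg_left step4
        (mul_nonneg (inv_nonneg.mpr (le_of_lt ha)) (le_of_lt hc))
    have h6 : ((s * σ)⁻¹ * cφ) * (2 * a * Real.exp (-a ^ 2 / 6))
        = 2 * cφ * Real.exp (-a ^ 2 / 6) := by
      rw [hadef]
      field_simp
    calc 2 * cφ * Real.exp (-a ^ 2 / 6)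
        = ((s * σ)⁻¹ * cφ) * (2 * a * Real.exp (-a ^ 2 / 6)) := h6.symm
      _ ≤ ((s * σ)⁻¹ * cφ) * ∫ v in Set.Ioo (-a) a, Real.exp (-v ^ 2 / 2 + ε * v) := h5
      _ = ∫ v in Set.Ioo (-a) a, Real.exp (-v ^ 2 / 2 + ε * v) * ((s * σ)⁻¹ * cφ) :=
          step3.symm
      _ ≤ ∫ v in Set.Ioo (-a) a, F v := step2
      _ ≤ ∫ v, F v := step1
  have hD : Dint φ n σ θ₀ ε = ∫ v, F v := rfl
  rw [hD, ← ha_sq]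
  exact key
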